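/- Let q ≥ 2 be a prime power, r ≥ 2, d ≥ 2 integers with q > d. Endow F_q^{r-1} × F_{r,d} with the uniform probability. Let C_1(a,F) = 1 if the univariate polynomial F(a, X_r) has a root in F_q, and C_1(a,F) = ∞ otherwise. Then P[C_1 = 1] = Σ_{j=1}^{d} (-1)^{j-1} · C(q,j) · q^{-j} + (-1)^d · C(q-1,d) · q^{-d-1}. -/

import Mathlib

open Function

/-- Fiber counting for a surjective additive hom on finite groups. -/
lemma fiber_count {A B : Type*} [AddCommGroup A] [AddCommGroup B] [Finite A] [Finite B]
    (f : A →+ B) (hf : Surjective f) (P : B → Prop) :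
    Nat.card {a : A // P (f a)} = Nat.card {b : B // P b} * Nat.card {a : A // f a = 0} := by
  classical
  cases nonempty_fintype A
  cases nonempty_fintype B
  have e1 : {a : A // P (f a)} ≃ Σ b : {b : B // P b}, {a : A // f a = b.1} :=
    { toFun := fun a => ⟨⟨f a.1, a.2⟩, ⟨a.1, rfl⟩⟩
      invFun := fun x => ⟨x.2.1, by rw [x.2.2]; exact x.1.2⟩
      left_inv := fun a => rfl
      right_inv := fun x => by
        obtain ⟨⟨b, hb⟩, a, ha⟩ := x
        dsimp at ha ⊢
        have hb' : b = f a := ha.symm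
        subst hb'
        rfl }
  have e2 : ∀ b : B, {a : A // f a = b} ≃ {a : A // f a = 0} := by
    intro b
    have ha0 := (hf b).choose_spec
    set a0 := (hf b).choose
    exact
      { toFun := fun a => ⟨a.1 - a0, by simp [map_sub, a.2, ha0]⟩
        invFun := fun a => ⟨a.1 + a0, by
          have := a.2
          simp only [map_add, this, ha0, zero_add]⟩
        left_inv := fun a => by simp
        right_inv := fun a => by simp }
  rw [Nat.card_congr e1]
  rw [Nat.card_eq_fintype_card, Fintype.card_sigma]
  simp only [fun b : {b : B // P b} => Nat.card_eq_fintype_card (α := {a : A // f a = b.1}) ▸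
    Nat.card_congr (e2 b.1), Nat.card_eq_fintype_card]
  rw [Finset.sum_const, smul_eq_mul]
  rfl


open Function Polynomial

variable {K : Type} [Field K] [Fintype K]

lemma card_degreeLT (n : ℕ) : Nat.card ↥(degreeLT K n) = Fintype.card K ^ n := by
  rw [Nat.card_congr (degreeLTEquiv K n).toEquiv, Nat.card_eq_fintype_card, Fintype.card_pi]
  simp

lemma vanish_count (d : ℕ) (t : Finset K) (ht : t.card ≤ d + 1) :
    Nat.card {g : ↥(degreeLT K (d+1)) // ∀ c ∈ t, Polynomial.eval c g.1 = 0}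
      * Fintype.card K ^ t.card = Fintype.card K ^ (d+1) := by
  classical
  set W := ↥(degreeLT K (d+1))
  have : Finite W := by
    exact Finite.of_equiv _ (degreeLTEquiv K (d+1)).toEquiv.symm
  set evt : W →+ ({x // x ∈ t} → K) :=
    AddMonoidHom.mk' (fun g c => Polynomial.eval c.1 g.1) (by
      intro g h
      funext c
      show Polynomial.eval _ ((g:K[X]) + (h:K[X])) = _
      rw [Polynomial.eval_add]
      rfl) with hevt
  have hsurj : Surjective evt := by
    intro r
    have hinj : Set.InjOn (Subtype.val : {x // x ∈ t} → K) (Finset.univ : Finset {x // x ∈ t}) :=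
      fun a _ b _ h => Subtype.ext h
    refine ⟨⟨Lagrange.interpolate Finset.univ Subtype.val r, ?_⟩, ?_⟩
    · rw [mem_degreeLT]
      refine lt_of_lt_of_le (Lagrange.degree_interpolate_lt _ hinj) ?_
      rw [Finset.card_univ, Fintype.card_coe]
      exact_mod_cast Nat.cast_le.mpr ht
    · funext c
      exact Lagrange.eval_interpolate_at_node _ hinj (Finset.mem_univ c)
  have h := fiber_count evt hsurj (fun _ => True)
  have h1 : Nat.card {a : W // True} = Nat.card W := Nat.card_congr (Equiv.subtypeUnivEquiv fun _ => trivial)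
  have h2 : Nat.card {b : {x // x ∈ t} → K // True} = Fintype.card K ^ t.card := by
    rw [Nat.card_congr (Equiv.subtypeUnivEquiv fun _ => trivial), Nat.card_eq_fintype_card,
      Fintype.card_pi]
    simp [Fintype.card_coe]
  have h3 : {a : W // evt a = 0} ≃ {g : W // ∀ c ∈ t, Polynomial.eval c g.1 = 0} := by
    refine Equiv.subtypeEquivRight fun g => ?_
    rw [funext_iff]
    constructor
    · intro hg c hc; exact hg ⟨c, hc⟩
    · intro hg c; exact hg c.1 c.2
  rw [h1, h2, Nat.card_congr h3, card_degreeLT] at h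
  rw [mul_comm, ← h]
lemma alt_sum (n : ℕ) (hn : 1 ≤ n) (d : ℕ) :
    ∑ j ∈ Finset.range (d+1), (-1:ℚ)^j * (n.choose j) = (-1)^d * ((n-1).choose d) := by
  induction d with
  | zero => simp
  | succ d ih =>
    rw [Finset.sum_range_succ, ih]
    obtain ⟨k, rfl⟩ : ∃ k, n = k + 1 := ⟨n - 1, by omega⟩
    have h : ((k+1).choose (d+1) : ℚ) = k.choose d + k.choose (d+1) := by
      rw [Nat.choose_succ_succ k d]; push_cast; ring
    simp only [Nat.add_sub_cancel]
    rw [h]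
    ring
lemma root_count {K : Type} [Field K] [Fintype K] (d : ℕ) (hq : d < Fintype.card K) :
    (Nat.card {g : ↥(degreeLT K (d+1)) // ∃ x : K, Polynomial.eval x g.1 = 0} : ℚ)
    = ∑ j ∈ Finset.Icc 1 d, (-1:ℚ)^(j-1) * ((Fintype.card K).choose j)
        * (Fintype.card K:ℚ)^(d+1-j)
      + (-1)^d * ((Fintype.card K - 1).choose d) := by
  classical
  set q := Fintype.card K with hqdef
  have hq1 : 1 ≤ q := Fintype.card_pos
  haveI : Finite ↥(degreeLT K (d+1)) :=
    Finite.of_equiv _ (degreeLTEquiv K (d+1)).toEquiv.symm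
  haveI : Fintype ↥(degreeLT K (d+1)) := Fintype.ofFinite _
  set W := ↥(degreeLT K (d+1))
  set S : K → Finset W := fun c => Finset.univ.filter fun g => Polynomial.eval c g.1 = 0
    with hS
  -- step 1 : the count is the card of a biUnion
  have step1 : Nat.card {g : W // ∃ x : K, Polynomial.eval x g.1 = 0}
      = ((Finset.univ : Finset K).biUnion S).card := by
    rw [Nat.card_eq_fintype_card, Fintype.card_subtype]
    congr 1
    ext g
    simp [hS, Finset.mem_biUnion]
  -- step 3 : cardinality of intersections
  have step3 : ∀ t : Finset K, t.Nonempty → ∀ (ht : t.Nonempty),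
      (t.inf' ht S).card = if t.card ≤ d then q^(d+1-t.card) else 1 := by
    intro t _ ht
    have hmem : t.inf' ht S = Finset.univ.filter
        fun g : W => ∀ c ∈ t, Polynomial.eval c g.1 = 0 := by
      ext g
      simp [Finset.mem_inf', hS]
    rw [hmem]
    have hcard : (Finset.univ.filter fun g : W => ∀ c ∈ t, Polynomial.eval c g.1 = 0).card
        = Nat.card {g : W // ∀ c ∈ t, Polynomial.eval c g.1 = 0} := by
      rw [Nat.card_eq_fintype_card, Fintype.card_subtype]
    rw [hcard]
    by_cases hle : t.card ≤ d
    · rw [if_pos hle]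
      have hv := vanish_count d t (by omega)
      have e : q ^ (d+1) = q^(d+1-t.card) * q^t.card := by
        rw [← pow_add, Nat.sub_add_cancel (le_trans hle (Nat.le_add_right d 1))]
      rw [e] at hv
      exact Nat.eq_of_mul_eq_mul_right (pow_pos hq1 _) hv
    · rw [if_neg hle]
      haveI : Unique {g : W // ∀ c ∈ t, Polynomial.eval c g.1 = 0} := by
        refine ⟨⟨⟨0, ?_⟩⟩, ?_⟩
        · intro c _; simp
        · rintro ⟨g, hg⟩
          have hdeg : g.1.degree < (t.card : ℕ) := by
            refine lt_of_lt_of_le (mem_degreeLT.mp g.2) ?_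
            have h1 : d + 1 ≤ t.card := Nat.not_le.mp hle
            exact_mod_cast Nat.cast_le.mpr h1
          have hg0 : g.1 = 0 :=
            Polynomial.eq_zero_of_degree_lt_of_eval_finset_eq_zero t hdeg hg
          apply Subtype.ext
          apply Subtype.ext
          simpa using hg0
      rw [Nat.card_unique]
  -- step 2 : inclusion-exclusion
  have step2 := Finset.inclusion_exclusion_card_biUnion (Finset.univ : Finset K) S
  -- define the summand as a function of the cardinality
  set g : ℕ → ℚ := fun j => if 0 < j then
      (-1:ℚ)^(j+1) * (if j ≤ d then (q:ℚ)^(d+1-j) else 1) else 0 with hg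
  have step4 : (((Finset.univ : Finset K).biUnion S).card : ℚ)
      = ∑ j ∈ Finset.range (q+1), (q.choose j : ℚ) * g j := by
    have := congrArg (fun z : ℤ => (z : ℚ)) step2
    push_cast at this
    rw [this]
    have hstep : ∀ x : {x // x ∈ (Finset.univ : Finset K).powerset.filter (·.Nonempty)},
        ((-1:ℚ))^(x.1.card+1) * ((x.1.inf' (by exact (Finset.mem_filter.1 x.2).2) S).card)
          = (if 0 < x.1.card then
              (-1:ℚ)^(x.1.card+1) * (if x.1.card ≤ d then (q:ℚ)^(d+1-x.1.card) else 1) else 0) := by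
      intro x
      have hne : x.1.Nonempty := (Finset.mem_filter.1 x.2).2
      rw [step3 x.1 hne hne]
      rw [if_pos (Finset.card_pos.mpr hne)]
      push_cast [apply_ite (fun n : ℕ => (n : ℚ))]
      ring_nf
    rw [Finset.sum_congr rfl (fun x _ => hstep x)]
    rw [Finset.sum_coe_sort ((Finset.univ : Finset K).powerset.filter (·.Nonempty))
      (fun t : Finset K => if 0 < t.card then
        (-1:ℚ)^(t.card+1) * (if t.card ≤ d then (q:ℚ)^(d+1-t.card) else 1) else 0)]
    rw [Finset.sum_filter]
    rw [Finset.sum_powerset]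
    rw [Finset.card_univ]
    refine Finset.sum_congr rfl fun j hj => ?_
    have : ∀ t ∈ Finset.univ.powersetCard j, (if (t : Finset K).Nonempty then
        (if 0 < t.card then (-1:ℚ)^(t.card+1) * (if t.card ≤ d then (q:ℚ)^(d+1-t.card) else 1)
          else 0) else 0) = g t.card := by
      intro t _
      by_cases h : t.Nonempty <;> simp [hg, h]
    rw [Finset.sum_congr rfl this, Finset.sum_powersetCard, Finset.card_univ]
    rw [nsmul_eq_mul]
  -- assemble
  rw [step1, step4]
  have hsplit : Finset.range (q+1) = Finset.Ico 0 (d+1) ∪ Finset.Ico (d+1) (q+1) := by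
    rw [Finset.range_eq_Ico]
    rw [Finset.Ico_union_Ico_eq_Ico (Nat.zero_le _) (by omega)]
  rw [Finset.range_eq_Ico,
    ← Finset.sum_Ico_consecutive (fun j => (q.choose j : ℚ) * g j) (Nat.zero_le (d+1))
      (by omega : d + 1 ≤ q + 1)]
  have partA : ∑ j ∈ Finset.Ico 0 (d+1), (q.choose j : ℚ) * g j
      = ∑ j ∈ Finset.Icc 1 d, (-1:ℚ)^(j-1) * ((Fintype.card K).choose j)
        * (Fintype.card K:ℚ)^(d+1-j) := by
    rw [Finset.sum_eq_sum_Ico_succ_bot (by omega : 0 < d + 1)]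
    have hg0 : g 0 = 0 := by simp [hg]
    rw [hg0, mul_zero, zero_add, Finset.Ico_add_one_right_eq_Icc]
    refine Finset.sum_congr rfl fun j hj => ?_
    obtain ⟨hj1, hj2⟩ := Finset.mem_Icc.mp hj
    have hgj : g j = (-1:ℚ)^(j+1) * (q:ℚ)^(d+1-j) := by
      rw [hg]
      simp only [if_pos (by omega : 0 < j), if_pos hj2]
    rw [hgj]
    have hsign : (-1:ℚ)^(j+1) = (-1:ℚ)^(j-1) := by
      have hj' : j + 1 = (j - 1) + 2 := by omega
      rw [hj', pow_add]
      norm_num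
    rw [hsign, hqdef]
    ring
  have partB : ∑ j ∈ Finset.Ico (d+1) (q+1), (q.choose j : ℚ) * g j
      = (-1:ℚ)^d * ((Fintype.card K - 1).choose d) := by
    have hB : ∀ j ∈ Finset.Ico (d+1) (q+1), (q.choose j : ℚ) * g j
        = -((-1:ℚ)^j * (q.choose j : ℚ)) := by
      intro j hj
      obtain ⟨hj1, hj2⟩ := Finset.mem_Ico.mp hj
      have hgj : g j = (-1:ℚ)^(j+1) := by
        rw [hg]
        simp only [if_pos (by omega : 0 < j), if_neg (by omega : ¬ j ≤ d), mul_one]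
      rw [hgj, pow_succ]
      ring
    rw [Finset.sum_congr rfl hB, Finset.sum_neg_distrib]
    have halt := alt_sum q hq1 q
    rw [Nat.choose_eq_zero_of_lt (by omega : q - 1 < q), Nat.cast_zero, mul_zero] at halt
    have halt2 := alt_sum q hq1 d
    rw [Finset.range_eq_Ico,
      ← Finset.sum_Ico_consecutive (fun j => (-1:ℚ)^j * (q.choose j : ℚ)) (Nat.zero_le (d+1))
        (by omega : d + 1 ≤ q + 1)] at halt
    rw [Finset.range_eq_Ico] at halt2
    rw [halt2] at halt
    have : ∑ j ∈ Finset.Ico (d+1) (q+1), (-1:ℚ)^j * (q.choose j : ℚ)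
        = -((-1:ℚ)^d * ((q-1).choose d : ℚ)) := by linarith
    rw [this, neg_neg, hqdef]
  rw [partA, partB]
section MultiVar

variable {K : Type} [Field K] [Fintype K] {m d : ℕ}

/-- substitution of `a` into the first `m` variables -/
noncomputable def subst (a : Fin m → K) :
    MvPolynomial (Fin (m+1)) K →ₐ[K] Polynomial K :=
  MvPolynomial.aeval (Fin.snoc (fun i => Polynomial.C (a i)) Polynomial.X)

lemma subst_eval (a : Fin m → K) (F : MvPolynomial (Fin (m+1)) K) (x : K) :
    Polynomial.eval x (subst a F) = MvPolynomial.eval (Fin.snoc a x) F := by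
  induction F using MvPolynomial.induction_on with
  | C c => simp [subst]
  | add p q hp hq => simp [map_add, hp, hq]
  | mul_X p i hp =>
    rw [map_mul, Polynomial.eval_mul, hp, MvPolynomial.eval_mul, MvPolynomial.eval_X]
    congr 1
    induction i using Fin.lastCases with
    | last => simp [subst]
    | cast j => simp [subst]

lemma subst_mem_degreeLT (a : Fin m → K) (F : MvPolynomial (Fin (m+1)) K)
    (hF : F.totalDegree ≤ d) : subst a F ∈ degreeLT K (d+1) := by
  rw [mem_degreeLT]
  have h1 : (subst a F).natDegree ≤ d * 1 := by
    refine MvPolynomial.aeval_natDegree_le F hF _ fun i => ?_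
    induction i using Fin.lastCases with
    | last => simp
    | cast j => simp
  rw [mul_one] at h1
  refine lt_of_le_of_lt (Polynomial.degree_le_natDegree.trans (Nat.cast_le.mpr h1)) ?_
  exact_mod_cast Nat.lt_succ_self d

/-- the restricted substitution map as an additive hom -/
noncomputable def substHom (a : Fin m → K) (d : ℕ) :
    ↥(MvPolynomial.restrictTotalDegree (Fin (m+1)) K d) →+ ↥(degreeLT K (d+1)) :=
  AddMonoidHom.mk' (fun F => ⟨subst a F.1,
      subst_mem_degreeLT a F.1 ((MvPolynomial.mem_restrictTotalDegree _ _ _).mp F.2)⟩)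
    (by
      intro F G
      apply Subtype.ext
      show subst a (F.1 + G.1) = subst a F.1 + subst a G.1
      rw [map_add])

lemma substHom_surjective (a : Fin m → K) : Function.Surjective (substHom (d := d) a) := by
  rintro ⟨g, hg⟩
  have hnd : g.natDegree ≤ d := by
    rcases eq_or_ne g 0 with rfl | h0
    · simp
    · have := (Polynomial.natDegree_lt_iff_degree_lt h0).mpr (mem_degreeLT.mp hg)
      omega
  set ι : MvPolynomial (Fin (m+1)) K := Polynomial.aeval (MvPolynomial.X (Fin.last m)) g
    with hι
  have htot : ι.totalDegree ≤ d := by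
    rw [hι, Polynomial.aeval_def, Polynomial.eval₂_eq_sum, Polynomial.sum]
    refine le_trans (MvPolynomial.totalDegree_finset_sum _ _) (Finset.sup_le fun k hk => ?_)
    refine le_trans (MvPolynomial.totalDegree_mul _ _) ?_
    have h1 : (algebraMap K (MvPolynomial (Fin (m+1)) K) (g.coeff k)).totalDegree = 0 :=
      MvPolynomial.totalDegree_C _
    have h2 : (MvPolynomial.X (σ := Fin (m+1)) (R := K) (Fin.last m) ^ k).totalDegree ≤ k := by
      refine le_trans (MvPolynomial.totalDegree_pow _ _) ?_
      simp [MvPolynomial.totalDegree_X]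
    have h3 : k ≤ d := le_trans (Polynomial.le_natDegree_of_ne_zero
      (Polynomial.mem_support_iff.mp hk)) hnd
    omega
  refine ⟨⟨ι, (MvPolynomial.mem_restrictTotalDegree _ _ _).mpr htot⟩, ?_⟩
  apply Subtype.ext
  show subst a ι = g
  rw [hι]
  rw [← Polynomial.aeval_algHom_apply]
  have : subst a (MvPolynomial.X (Fin.last m)) = Polynomial.X := by
    simp [subst]
  rw [this]
  simp [Polynomial.aeval_X_left_apply]

end MultiVar
/-- The probability that a uniformly random pair `(a, F)`, with `a ∈ F_q^(r-1)` and `F` a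
polynomial in `r = m+1 ≥ 2` variables of total degree at most `d`, is such that the univariate
polynomial `F(a, X_r)` has a root in `F_q`, equals
`Σ_{j=1}^{d} (-1)^{j-1} C(q,j) q^{-j} + (-1)^d C(q-1,d) q^{-d-1}`. -/
theorem prob_first_search (K : Type) [Field K] [Fintype K] (m d : ℕ)
    (hm : 1 ≤ m) (hd : 2 ≤ d) (hq : d < Fintype.card K) :
    (Nat.card {p : (Fin m → K) × MvPolynomial (Fin (m + 1)) K //
        p.2.totalDegree ≤ d ∧ ∃ x : K, MvPolynomial.eval (Fin.snoc p.1 x) p.2 = 0} : ℚ)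
      = (∑ j ∈ Finset.Icc 1 d,
            (-1 : ℚ) ^ (j - 1) * ((Fintype.card K).choose j) * ((Fintype.card K : ℚ))⁻¹ ^ j
          + (-1 : ℚ) ^ d * ((Fintype.card K - 1).choose d) * ((Fintype.card K : ℚ))⁻¹ ^ (d + 1))
        * ((Fintype.card K : ℚ) ^ m *
            Nat.card {F : MvPolynomial (Fin (m + 1)) K // F.totalDegree ≤ d}) := by
  classical
  set q := Fintype.card K with hqdef
  have hq1 : 1 ≤ q := Fintype.card_pos
  have hq0 : (q : ℚ) ≠ 0 := by positivity
  set A := MvPolynomial.restrictTotalDegree (Fin (m+1)) K d with hA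
  haveI hAfin : Finite ↥A := Module.finite_of_finite K
  haveI : Finite ↥(degreeLT K (d+1)) :=
    Finite.of_equiv _ (degreeLTEquiv K (d+1)).toEquiv.symm
  -- N = card A
  have hN : Nat.card {F : MvPolynomial (Fin (m + 1)) K // F.totalDegree ≤ d} = Nat.card ↥A :=
    Nat.card_congr (Equiv.subtypeEquivRight fun F =>
      ((MvPolynomial.mem_restrictTotalDegree _ _ _)).symm)
  -- per-a counts
  set R : ℕ := Nat.card {g : ↥(degreeLT K (d+1)) // ∃ x : K, Polynomial.eval x g.1 = 0}
    with hR
  have key : ∀ a : Fin m → K,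
      Nat.card {F : MvPolynomial (Fin (m+1)) K //
          F.totalDegree ≤ d ∧ ∃ x : K, MvPolynomial.eval (Fin.snoc a x) F = 0}
        = R * Nat.card {F : ↥A // substHom a d F = 0} ∧
      Nat.card ↥A = q^(d+1) * Nat.card {F : ↥A // substHom a d F = 0} := by
    intro a
    have e2 : {F : MvPolynomial (Fin (m+1)) K //
          F.totalDegree ≤ d ∧ ∃ x : K, MvPolynomial.eval (Fin.snoc a x) F = 0}
        ≃ {F : ↥A // ∃ x : K, Polynomial.eval x ((substHom a d F) : Polynomial K) = 0} :=
      { toFun := fun F => ⟨⟨F.1, (MvPolynomial.mem_restrictTotalDegree _ _ _).mpr F.2.1⟩, by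
          obtain ⟨x, hx⟩ := F.2.2
          exact ⟨x, by rw [show ((substHom a d ⟨F.1, _⟩ : ↥(degreeLT K (d+1))) : Polynomial K)
            = subst a F.1 from rfl, subst_eval]; exact hx⟩⟩
        invFun := fun F => ⟨F.1.1, (MvPolynomial.mem_restrictTotalDegree _ _ _).mp F.1.2, by
          obtain ⟨x, hx⟩ := F.2
          refine ⟨x, ?_⟩
          rw [← subst_eval]
          exact hx⟩
        left_inv := fun F => rfl
        right_inv := fun F => rfl }
    have h1 := fiber_count (substHom a d) (substHom_surjective a)
      (fun g => ∃ x : K, Polynomial.eval x (g : Polynomial K) = 0)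
    have h2 := fiber_count (substHom a d) (substHom_surjective a) (fun _ => True)
    constructor
    · rw [Nat.card_congr e2, h1, hR]
    · have hAcard : Nat.card {a_1 : ↥A // True} = Nat.card ↥A :=
        Nat.card_congr (Equiv.subtypeUnivEquiv fun _ => trivial)
      have hWcard : Nat.card {b : ↥(degreeLT K (d+1)) // True} = q^(d+1) := by
        rw [Nat.card_congr (Equiv.subtypeUnivEquiv fun _ => trivial), card_degreeLT]
      rw [hAcard, hWcard] at h2
      exact h2
  -- split the pair count as a sum over a
  haveI : ∀ a : Fin m → K, Finite {F : MvPolynomial (Fin (m+1)) K //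
      F.totalDegree ≤ d ∧ ∃ x : K, MvPolynomial.eval (Fin.snoc a x) F = 0} := by
    intro a
    refine Finite.of_injective (fun F => (⟨F.1, (MvPolynomial.mem_restrictTotalDegree
      _ _ _).mpr F.2.1⟩ : ↥A)) ?_
    intro F G h
    have h2 := congrArg (fun x : ↥A => x.1) h
    exact Subtype.ext h2
  haveI : ∀ a : Fin m → K, Fintype {F : MvPolynomial (Fin (m+1)) K //
      F.totalDegree ≤ d ∧ ∃ x : K, MvPolynomial.eval (Fin.snoc a x) F = 0} := fun a =>
    Fintype.ofFinite _
  have esig : {p : (Fin m → K) × MvPolynomial (Fin (m + 1)) K //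
        p.2.totalDegree ≤ d ∧ ∃ x : K, MvPolynomial.eval (Fin.snoc p.1 x) p.2 = 0}
      ≃ Σ a : Fin m → K, {F : MvPolynomial (Fin (m+1)) K //
        F.totalDegree ≤ d ∧ ∃ x : K, MvPolynomial.eval (Fin.snoc a x) F = 0} :=
    { toFun := fun p => ⟨p.1.1, ⟨p.1.2, p.2⟩⟩
      invFun := fun x => ⟨(x.1, x.2.1), x.2.2⟩
      left_inv := fun p => rfl
      right_inv := fun x => rfl }
  have hcount : Nat.card {p : (Fin m → K) × MvPolynomial (Fin (m + 1)) K //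
        p.2.totalDegree ≤ d ∧ ∃ x : K, MvPolynomial.eval (Fin.snoc p.1 x) p.2 = 0}
      = ∑ a : Fin m → K, Nat.card {F : MvPolynomial (Fin (m+1)) K //
        F.totalDegree ≤ d ∧ ∃ x : K, MvPolynomial.eval (Fin.snoc a x) F = 0} := by
    rw [Nat.card_congr esig, Nat.card_eq_fintype_card, Fintype.card_sigma]
    exact Finset.sum_congr rfl fun a _ => (Nat.card_eq_fintype_card).symm
  -- pass to ℚ
  have hk : ∀ a : Fin m → K, ((Nat.card {F : ↥A // substHom a d F = 0} : ℚ))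
      = (Nat.card ↥A : ℚ) / (q:ℚ)^(d+1) := by
    intro a
    have := (key a).2
    have h2 : ((Nat.card ↥A : ℕ) : ℚ) = (q:ℚ)^(d+1) * Nat.card {F : ↥A // substHom a d F = 0} := by
      rw [this]; push_cast; ring
    rw [h2, mul_comm, mul_div_assoc, div_self (pow_ne_zero _ hq0), mul_one]
  have htotal : (Nat.card {p : (Fin m → K) × MvPolynomial (Fin (m + 1)) K //
        p.2.totalDegree ≤ d ∧ ∃ x : K, MvPolynomial.eval (Fin.snoc p.1 x) p.2 = 0} : ℚ)
      = (q:ℚ)^m * ((R:ℚ) * ((Nat.card ↥A : ℚ) / (q:ℚ)^(d+1))) := by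
    rw [hcount, Nat.cast_sum]
    have hsum : ∑ a : Fin m → K, ((Nat.card {F : MvPolynomial (Fin (m+1)) K //
          F.totalDegree ≤ d ∧ ∃ x : K, MvPolynomial.eval (Fin.snoc a x) F = 0} : ℕ) : ℚ)
        = ∑ _a : Fin m → K, (R:ℚ) * ((Nat.card ↥A : ℚ) / (q:ℚ)^(d+1)) :=
      Finset.sum_congr rfl fun a _ => by rw [(key a).1, Nat.cast_mul, hk a]
    rw [hsum]
    rw [Finset.sum_const, Finset.card_univ, Fintype.card_pi]
    rw [Finset.prod_const, Finset.card_univ, Fintype.card_fin, nsmul_eq_mul]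
    push_cast
    ring
  rw [htotal, hN]
  have hRval := root_count (K := K) d hq
  rw [← hR, ← hqdef] at hRval
  rw [hRval]
  have hpow : ∀ j ∈ Finset.Icc 1 d, ((q:ℚ))⁻¹ ^ j * (q:ℚ)^(d+1) = (q:ℚ)^(d+1-j) := by
    intro j hj
    obtain ⟨hj1, hj2⟩ := Finset.mem_Icc.mp hj
    have hsplit : (q:ℚ)^(d+1) = (q:ℚ)^j * (q:ℚ)^(d+1-j) := by
      rw [← pow_add]; congr 1; omega
    rw [hsplit, inv_pow, inv_mul_cancel_left₀ (pow_ne_zero _ hq0)]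
  have hform : (∑ j ∈ Finset.Icc 1 d, (-1:ℚ)^(j-1) * (q.choose j) * (q:ℚ)^(d+1-j)
      + (-1:ℚ)^d * ((q-1).choose d))
      = (∑ j ∈ Finset.Icc 1 d, (-1:ℚ)^(j-1) * (q.choose j) * ((q:ℚ))⁻¹^j
      + (-1:ℚ)^d * ((q-1).choose d) * ((q:ℚ))⁻¹^(d+1)) * (q:ℚ)^(d+1) := by
    rw [add_mul, Finset.sum_mul]
    congr 1
    · refine Finset.sum_congr rfl fun j hj => ?_
      rw [← hpow j hj]
      ring
    · rw [mul_assoc, inv_pow, inv_mul_cancel₀ (pow_ne_zero _ hq0), mul_one]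
  rw [hform]
  field_simp
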